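/- arXiv:2002.04336 — 6 statements merged into one kernel-verified Lean document; each statement's English description precedes it below -/
import Mathlib

section
/- Let M be a commutative s-Noetherian monoid (every ascending chain of ideals stabilises, equivalently every ideal is finitely generated) and S ⊆ M a submonoid. For every ideal 𝔪 of M there exists an element s ∈ S such that f⁻¹(f⁎(𝔪)) = (𝔪 : s), where f : M → S⁻¹M is the localisation map and f⁎(𝔪) the ideal of S⁻¹M generated by f(𝔪). -/
def IsRightIdeal {M : Type*} [Monoid M] (I : Set M) : Prop :=
  ∀ m ∈ I, ∀ x : M, m * x ∈ I

def resid {M : Type*} [Monoid M] (I : Set M) (a : M) : Set M := {x | a * x ∈ I}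


def locPush {M : Type*} [CommMonoid M] (S : Submonoid M) (A : Set M) :
    Set (Localization S) :=
  {y | ∃ x ∈ A, ∃ n : Localization S, y = Localization.mk x 1 * n}

def locMap {M : Type*} [CommMonoid M] (S : Submonoid M) : M → Localization S :=
  fun m => Localization.mk m 1

theorem pull_push_eq_resid_of_sNoetherian {M : Type*} [CommMonoid M]
    (hNoeth : ∀ I : Set M, IsRightIdeal I →
      ∃ T : Finset M, I = {y : M | ∃ t ∈ T, ∃ n : M, y = t * n})
    (S : Submonoid M) (m : Set M) (hm : IsRightIdeal m) :
    ∃ s ∈ S, locMap S ⁻¹' (locPush S m) = resid m s := by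
  set I : Set M := locMap S ⁻¹' (locPush S m) with hI
  have hmem : ∀ x : M, x ∈ I ↔ ∃ s ∈ S, s * x ∈ m := by
    intro x
    constructor
    · rintro ⟨a, ha, n, hn⟩
      induction n using Localization.induction_on with
      | H p =>
        obtain ⟨b, t⟩ := p
        have hn' : Localization.mk x 1 = Localization.mk (a * b) t := by
          simpa [locMap, Localization.mk_mul] using hn
        rw [Localization.mk_eq_mk_iff, Localization.r_iff_exists] at hn'
        obtain ⟨c, hc⟩ := hn'
        refine ⟨(c : M) * t, S.mul_mem c.2 t.2, ?_⟩
        have hc' : (c : M) * (t * x) = a * b * (c : M) := by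
          simpa [mul_comm, mul_left_comm, mul_assoc] using hc
        have h2 : (c : M) * t * x = a * (b * c) := by
          rw [mul_assoc, hc', mul_assoc]
        rw [h2]
        exact hm a ha _
    · rintro ⟨s, hs, hsx⟩
      refine ⟨s * x, hsx, Localization.mk 1 ⟨s, hs⟩, ?_⟩
      show Localization.mk x 1 = _
      rw [Localization.mk_mul, Localization.mk_eq_mk_iff, Localization.r_iff_exists]
      exact ⟨1, by simp [mul_comm]⟩
  have hIdeal : IsRightIdeal I := by
    intro a haI y
    obtain ⟨s, hs, hsa⟩ := (hmem a).1 haI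
    exact (hmem (a * y)).2 ⟨s, hs, by rw [← mul_assoc]; exact hm _ hsa y⟩
  obtain ⟨T, hT⟩ := hNoeth I hIdeal
  classical
  set g : M → M := fun t => if h : ∃ s ∈ S, s * t ∈ m then h.choose else 1 with hg
  have hg1 : ∀ t, g t ∈ S := by
    intro t
    by_cases h : ∃ s ∈ S, s * t ∈ m
    · simp only [hg, dif_pos h]
      exact h.choose_spec.1
    · simp only [hg, dif_neg h]
      exact S.one_mem
  have hg2 : ∀ t ∈ T, g t * t ∈ m := by
    intro t ht
    have htI : t ∈ I := by
      rw [hT]; exact ⟨t, ht, 1, (mul_one t).symm⟩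
    have h : ∃ s ∈ S, s * t ∈ m := (hmem t).1 htI
    simp only [hg, dif_pos h]
    exact h.choose_spec.2
  refine ⟨∏ t ∈ T, g t, S.prod_mem (fun t _ => hg1 t), ?_⟩
  ext x
  simp only [resid, Set.mem_setOf_eq]
  constructor
  · intro hx
    obtain ⟨t, ht, n, rfl⟩ := hT ▸ hx
    rw [← Finset.mul_prod_erase T g ht]
    set P := ∏ u ∈ T.erase t, g u with hP
    have : (g t * P) * (t * n) = (g t * t) * (n * P) := by
      simp [mul_comm, mul_left_comm, mul_assoc]
    rw [this]
    exact hm _ (hg2 t ht) _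
  · intro hx
    exact (hmem x).2 ⟨_, S.prod_mem (fun t _ => hg1 t), hx⟩
end

section
/- Let M be a commutative monoid, F a Grothendieck topology on M, 𝔠 an ideal of M, and 𝔞 an ideal maximal among ideals containing 𝔠 and not belonging to F. Then 𝔞 is a prime ideal. -/
def IsGTop {M : Type*} [Monoid M] (F : Set (Set M)) : Prop :=
  (∀ I ∈ F, IsRightIdeal I) ∧ Set.univ ∈ F ∧
  (∀ I ∈ F, ∀ m : M, resid I m ∈ F) ∧
  (∀ I : Set M, IsRightIdeal I → ∀ J ∈ F, (∀ m ∈ J, resid I m ∈ F) → I ∈ F)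


def IsPrimeIdeal {M : Type*} [CommMonoid M] (I : Set M) : Prop :=
  IsRightIdeal I ∧ I ≠ Set.univ ∧ ∀ a b : M, a * b ∈ I → a ∈ I ∨ b ∈ I

theorem maximal_not_in_topology_is_prime {M : Type*} [CommMonoid M]
    (F : Set (Set M)) (hF : IsGTop F) (c a : Set M)
    (hc : IsRightIdeal c) (ha : IsRightIdeal a)
    (hca : c ⊆ a) (haF : a ∉ F)
    (hmax : ∀ b : Set M, IsRightIdeal b → c ⊆ b → b ∉ F → a ⊆ b → b = a) :
    IsPrimeIdeal a := by
  obtain ⟨hFI, huniv, hres, hcover⟩ := hF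
  have hainb : ∀ z ∈ a, resid a z ∈ F := by
    intro z hz
    have h1 : resid a z = Set.univ := by
      ext w; simp only [resid, Set.mem_setOf_eq, Set.mem_univ, iff_true]
      exact ha z hz w
    rw [h1]; exact huniv
  refine ⟨ha, ?_, ?_⟩
  · rintro rfl; exact haF huniv
  · intro x y hxy
    by_contra h
    push_neg at h
    obtain ⟨hx, hy⟩ := h
    set b : Set M := {z | resid a z ∈ F} with hb
    have hba : b = a := by
      apply hmax
      · intro m hm n
        have h2 : resid a (m * n) = resid (resid a m) n := by
          ext w; simp [resid, mul_assoc]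
        show resid a (m * n) ∈ F
        rw [h2]; exact hres _ hm n
      · intro z hz; exact hainb z (hca hz)
      · intro hbF
        exact haF (hcover a ha b hbF (fun m hm => hm))
      · intro z hz; exact hainb z hz
    have hxb : resid a x ∉ F := by
      intro hmem
      have : x ∈ b := hmem
      rw [hba] at this
      exact hx this
    have hrx : resid a x = a := by
      apply hmax
      · intro m hm n
        show x * (m * n) ∈ a
        rw [← mul_assoc]
        exact ha _ hm n
      · intro z hz
        show x * z ∈ a
        rw [mul_comm]
        exact ha z (hca hz) x
      · exact hxb
      · intro z hz
        show x * z ∈ a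
        rw [mul_comm]
        exact ha z hz x
    have : y ∈ resid a x := hxy
    rw [hrx] at this
    exact hy this
end

section
/- Let M be a commutative monoid and F a Grothendieck topology on M such that every ideal in F contains a finitely generated ideal belonging to F. Then for any ideal 𝔠 ∉ F, there exists a prime ideal 𝔭 with 𝔠 ⊆ 𝔭 and 𝔭 ∉ F. -/
lemma mem_of_subset_mem {M : Type*} [Monoid M] {F : Set (Set M)} (hF : IsGTop F)
    {a b : Set M} (ha : a ∈ F) (hb : IsRightIdeal b) (hab : a ⊆ b) : b ∈ F := by
  refine hF.2.2.2 b hb a ha (fun m hm => ?_)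
  have : resid b m = Set.univ := Set.eq_univ_of_forall fun x => hb m (hab hm) x
  rw [this]; exact hF.2.1

theorem exists_prime_not_in_topology {M : Type*} [CommMonoid M]
    (F : Set (Set M)) (hF : IsGTop F)
    (hfin : ∀ b ∈ F, ∃ T : Finset M, (↑T : Set M) ⊆ b ∧
      {y : M | ∃ t ∈ T, ∃ n : M, y = t * n} ∈ F)
    (c : Set M) (hc : IsRightIdeal c) (hcF : c ∉ F) :
    ∃ p : Set M, IsPrimeIdeal p ∧ c ⊆ p ∧ p ∉ F := by
  set S : Set (Set M) := {I | IsRightIdeal I ∧ c ⊆ I ∧ I ∉ F} with hS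
  have hchain : ∀ ch ⊆ S, IsChain (· ⊆ ·) ch → ch.Nonempty →
      ∃ ub ∈ S, ∀ s ∈ ch, s ⊆ ub := by
    intro ch hchS hch hne
    refine ⟨⋃₀ ch, ⟨?_, ?_, ?_⟩, fun s hs => Set.subset_sUnion_of_mem hs⟩
    · rintro m ⟨I, hI, hmI⟩ x
      exact ⟨I, hI, (hchS hI).1 m hmI x⟩
    · obtain ⟨I, hI⟩ := hne
      exact (hchS hI).2.1.trans (Set.subset_sUnion_of_mem hI)
    · intro hU
      obtain ⟨T, hTsub, hTF⟩ := hfin _ hU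
      have : Nonempty ch := hne.to_subtype
      have hdir : Directed (· ⊆ ·) (fun I : ch => (I : Set M)) := by
        rintro ⟨I, hI⟩ ⟨J, hJ⟩
        rcases hch.total hI hJ with h | h
        · exact ⟨⟨J, hJ⟩, h, subset_rfl⟩
        · exact ⟨⟨I, hI⟩, subset_rfl, h⟩
      obtain ⟨⟨I, hI⟩, hTI⟩ := hdir.exists_mem_subset_of_finset_subset_biUnion
        (by rwa [Set.iUnion_coe_set, ← Set.sUnion_eq_biUnion])
      refine (hchS hI).2.2 (mem_of_subset_mem hF hTF (hchS hI).1 ?_)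
      rintro y ⟨t, ht, n, rfl⟩
      exact (hchS hI).1 t (hTI ht) n
  obtain ⟨p, hcp, hpS, hpmax⟩ := zorn_subset_nonempty S hchain c ⟨hc, subset_rfl, hcF⟩
  obtain ⟨hpI, hcp', hpF⟩ := hpS
  refine ⟨p, ⟨hpI, ?_, ?_⟩, hcp', hpF⟩
  · rintro rfl
    exact hpF hF.2.1
  · intro a b hab
    by_contra h
    push_neg at h
    obtain ⟨ha, hb⟩ := h
    -- ideal generated by p and a
    have key : ∀ x : M, x ∉ p → p ∪ {y | ∃ n, y = x * n} ∈ F := by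
      intro x hx
      by_contra hxF
      have hmem : p ∪ {y | ∃ n, y = x * n} ∈ S := by
        refine ⟨?_, hcp'.trans Set.subset_union_left, hxF⟩
        rintro m (hm | ⟨n, rfl⟩) z
        · exact Or.inl (hpI m hm z)
        · exact Or.inr ⟨n * z, by rw [mul_assoc]⟩
      have := hpmax hmem Set.subset_union_left
      exact hx (this (Or.inr ⟨1, (mul_one x).symm⟩))
    have haF := key a ha
    have hbF := key b hb
    -- resid p a ∈ F since it contains p ∪ bM
    have hra : resid p a ∈ F := by
      refine mem_of_subset_mem hF hbF ?_ ?_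
      · intro m hm z
        show a * (m * z) ∈ p
        rw [← mul_assoc]
        exact hpI _ hm z
      · rintro y (hy | ⟨n, rfl⟩)
        · show a * y ∈ p
          rw [mul_comm]; exact hpI y hy a
        · show a * (b * n) ∈ p
          rw [← mul_assoc]
          exact hpI _ hab n
    -- conclude p ∈ F via axiom 4 with J = p ∪ aM
    refine hpF (hF.2.2.2 p hpI _ haF ?_)
    rintro m (hm | ⟨n, rfl⟩)
    · have : resid p m = Set.univ := Set.eq_univ_of_forall fun z => hpI m hm z
      rw [this]; exact hF.2.1
    · refine mem_of_subset_mem hF hra ?_ ?_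
      · intro y hy z
        show a * n * (y * z) ∈ p
        rw [← mul_assoc]
        exact hpI _ hy z
      · intro y hy
        show a * n * y ∈ p
        rw [mul_right_comm]
        exact hpI _ hy n
end

section
/- Let M be a commutative monoid such that M/M× is finitely generated, where M× is the group of units. Then for every prime ideal 𝔭 of M there exists f ∈ M such that D(f) = {𝔮 ∈ Spec(M) | f ∉ 𝔮} equals {𝔮 ∈ Spec(M) | 𝔮 ⊆ 𝔭}; consequently, the Zariski topology on Spec(M) coincides with the order topology (open sets are downward-closed sets). -/
lemma one_not_mem {M : Type*} [CommMonoid M] {q : Set M} (hq : IsPrimeIdeal q) :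
    (1 : M) ∉ q := by
  intro h1
  exact hq.2.1 (Set.eq_univ_of_forall fun x => by simpa using hq.1 1 h1 x)

lemma unit_not_mem {M : Type*} [CommMonoid M] {q : Set M} (hq : IsPrimeIdeal q)
    {u : M} (hu : IsUnit u) : u ∉ q := by
  intro hmem
  obtain ⟨v, rfl⟩ := hu
  have : (v : M) * (↑v⁻¹ : M) ∈ q := hq.1 _ hmem _
  rw [Units.mul_inv] at this
  exact one_not_mem hq this

theorem zariski_eq_order_topology {M : Type*} [CommMonoid M]
    (hfg : ∃ T : Finset M, ∀ m : M,
      m ∈ Submonoid.closure ((↑T : Set M) ∪ {u : M | IsUnit u})) :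
    (∀ p : Set M, IsPrimeIdeal p → ∃ f : M,
        {q : Set M | IsPrimeIdeal q ∧ f ∉ q} =
          {q : Set M | IsPrimeIdeal q ∧ q ⊆ p}) ∧
      (∀ P : Set (Set M), (∀ q ∈ P, IsPrimeIdeal q) →
        (∀ q ∈ P, ∀ r : Set M, IsPrimeIdeal r → r ⊆ q → r ∈ P) →
        ∀ q ∈ P, ∃ f : M, f ∉ q ∧
          ∀ r : Set M, IsPrimeIdeal r → f ∉ r → r ∈ P) := by
  classical
  obtain ⟨T, hT⟩ := hfg
  have main : ∀ p : Set M, IsPrimeIdeal p → ∃ f : M,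
      {q : Set M | IsPrimeIdeal q ∧ f ∉ q} = {q : Set M | IsPrimeIdeal q ∧ q ⊆ p} := by
    intro p hp
    refine ⟨(T.filter (fun t => t ∉ p)).prod id, ?_⟩
    ext q
    simp only [Set.mem_setOf_eq]
    constructor
    · rintro ⟨hq, hf⟩
      refine ⟨hq, fun m hmq => ?_⟩
      by_contra hmp
      have key : ∀ m : M, m ∈ q → m ∉ p → ∃ t ∈ T, t ∉ p ∧ t ∈ q := by
        intro m
        have hm := hT m
        induction hm using Submonoid.closure_induction with
        | mem x hx =>
          intro hxq hxp
          rcases hx with hx | hx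
          · exact ⟨x, hx, hxp, hxq⟩
          · exact absurd hxq (unit_not_mem hq hx)
        | one => intro h1 _; exact absurd h1 (one_not_mem hq)
        | mul a b ha hb iha ihb =>
          intro habq habp
          have hap : a ∉ p := fun h => habp (hp.1 a h b)
          have hbp : b ∉ p := fun h => habp (by rw [mul_comm]; exact hp.1 b h a)
          rcases hq.2.2 a b habq with h | h
          · exact iha h hap
          · exact ihb h hbp
      obtain ⟨t, htT, htp, htq⟩ := key m hmq hmp
      have heq : (T.filter fun t => t ∉ p).prod id =
          t * ((T.filter fun t => t ∉ p).erase t).prod id :=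
        (Finset.mul_prod_erase _ _ (Finset.mem_filter.mpr ⟨htT, htp⟩)).symm
      exact hf (heq ▸ hq.1 t htq _)
    · rintro ⟨hq, hsub⟩
      refine ⟨hq, ?_⟩
      have : ∀ s : Finset M, (∀ x ∈ s, x ∉ q) → s.prod id ∉ q := by
        intro s
        induction s using Finset.induction_on with
        | empty => intro _; simpa using one_not_mem hq
        | insert _ _ hnot ih =>
          rename_i a s
          intro hall hmem
          rw [Finset.prod_insert hnot] at hmem
          rcases hq.2.2 _ _ hmem with h | h
          · exact hall a (Finset.mem_insert_self a s) h
          · exact ih (fun x hx => hall x (Finset.mem_insert_of_mem hx)) h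
      exact this _ fun x hx hxq => (Finset.mem_filter.mp hx).2 (hsub hxq)
  refine ⟨main, ?_⟩
  intro P hP hdown q hqP
  obtain ⟨f, hf⟩ := main q (hP q hqP)
  have hfq : f ∉ q := by
    have : q ∈ {q' : Set M | IsPrimeIdeal q' ∧ q' ⊆ q} := ⟨hP q hqP, le_refl _⟩
    rw [← hf] at this
    exact this.2
  refine ⟨f, hfq, fun r hr hfr => ?_⟩
  have : r ∈ {q' : Set M | IsPrimeIdeal q' ∧ q' ⊆ q} := by rw [← hf]; exact ⟨hr, hfr⟩
  exact hdown q hqP r hr this.2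
end

section
/- Let M be a commutative monoid, Υ : P(Spec M) → Top(M) defined by Υ(P) = {ideals 𝔞 | V(𝔞) ∩ P = ∅}, and Ξ : Top(M) → P(Spec M) defined by Ξ(F) = {𝔭 ∈ Spec M | 𝔭 ∉ F}. Then (Υ, Ξ) is a Galois connection: for any subset P of Spec(M) and any Grothendieck topology F on M, F ⊆ Υ(P) if and only if P ⊆ Ξ(F). -/
theorem galois_connection_topologies_primes {M : Type*} [CommMonoid M]
    (P : Set (Set M)) (hP : ∀ p ∈ P, IsPrimeIdeal p)
    (F : Set (Set M)) (hF : IsGTop F) :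
    F ⊆ {a : Set M | IsRightIdeal a ∧ ∀ p ∈ P, ¬ a ⊆ p} ↔
      P ⊆ {p : Set M | IsPrimeIdeal p ∧ p ∉ F} := by
  obtain ⟨hFid, hFuniv, hFres, hFloc⟩ := hF
  constructor
  · intro h p hp
    refine ⟨hP p hp, fun hpF => ?_⟩
    exact (h hpF).2 p hp (subset_refl p)
  · intro h a haF
    refine ⟨hFid a haF, fun p hp hap => ?_⟩
    apply (h hp).2
    apply hFloc p (hP p hp).1 a haF
    intro m hm
    have : resid p m = Set.univ := by
      ext x
      simp only [resid, Set.mem_setOf_eq, Set.mem_univ, iff_true]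
      exact (hP p hp).1 m (hap hm) x
    rw [this]; exact hFuniv
end

section
/- Let M be a commutative monoid and P a subset of Spec(M). Then Ξ(Υ(P)) = {𝔮 ∈ Spec(M) | ∃ 𝔭 ∈ P, 𝔮 ⊆ 𝔭}, the downward closure of P. In particular, P is stable under the Galois connection (Υ, Ξ) if and only if P is downward closed (i.e., open in the order topology). -/
theorem stable_iff_downward_closed {M : Type*} [CommMonoid M]
    (P : Set (Set M)) (hP : ∀ p ∈ P, IsPrimeIdeal p) :
    {q : Set M | IsPrimeIdeal q ∧
        q ∉ {a : Set M | IsRightIdeal a ∧ ∀ p ∈ P, ¬ a ⊆ p}} =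
      {q : Set M | IsPrimeIdeal q ∧ ∃ p ∈ P, q ⊆ p} ∧
    (P = {q : Set M | IsPrimeIdeal q ∧
        q ∉ {a : Set M | IsRightIdeal a ∧ ∀ p ∈ P, ¬ a ⊆ p}} ↔
      ∀ q p : Set M, IsPrimeIdeal q → p ∈ P → q ⊆ p → q ∈ P) := by
  have key : {q : Set M | IsPrimeIdeal q ∧
        q ∉ {a : Set M | IsRightIdeal a ∧ ∀ p ∈ P, ¬ a ⊆ p}} =
      {q : Set M | IsPrimeIdeal q ∧ ∃ p ∈ P, q ⊆ p} := by
    ext q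
    simp only [Set.mem_setOf_eq, not_and, not_forall, not_not]
    constructor
    · rintro ⟨hq, h⟩
      obtain ⟨p, hp, hsub⟩ := h hq.1
      exact ⟨hq, p, hp, hsub⟩
    · rintro ⟨hq, p, hp, hsub⟩
      exact ⟨hq, fun _ => ⟨p, hp, hsub⟩⟩
  refine ⟨key, ?_⟩
  rw [key]
  constructor
  · intro hPeq q p hq hp hsub
    rw [hPeq]
    exact ⟨hq, p, hp, hsub⟩
  · intro hdc
    ext q
    constructor
    · intro hq
      exact ⟨hP q hq, q, hq, le_refl q⟩
    · rintro ⟨hq, p, hp, hsub⟩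
      exact hdc q p hq hp hsub
end
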